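/- Let a,b,c,d be Hamilton quaternions such that M = [[a,b],[c,d]] satisfies M·σ̂(M) = σ̂(M)·M = 1. Then for every Hamilton quaternion z with π_k(z) > 0, one has c·z + d ≠ 0 and π_k((a·z + b)·(c·z + d)⁻¹) = π_k(z) / nrm(c·z + d). -/

import Mathlib

/-- The orthogonal involution `♯` on the Hamilton quaternions negating the `k`-component. -/
def qSharp (q : Quaternion ℝ) : Quaternion ℝ := ⟨q.re, q.imI, q.imJ, -q.imK⟩

/-- The twisted adjugate involution `σ̂` on 2×2 quaternionic matrices. -/
def hatSigma (M : Matrix (Fin 2) (Fin 2) (Quaternion ℝ)) :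
    Matrix (Fin 2) (Fin 2) (Quaternion ℝ) :=
  !![qSharp (M 1 1), -qSharp (M 0 1); -qSharp (M 1 0), qSharp (M 0 0)]

/-- The quaternion `k`. -/
noncomputable def kq : Quaternion ℝ := ⟨0,0,0,1⟩

@[simp] lemma qSharp_re (q : Quaternion ℝ) : (qSharp q).re = q.re := rfl
@[simp] lemma qSharp_imI (q : Quaternion ℝ) : (qSharp q).imI = q.imI := rfl
@[simp] lemma qSharp_imJ (q : Quaternion ℝ) : (qSharp q).imJ = q.imJ := rfl
@[simp] lemma qSharp_imK (q : Quaternion ℝ) : (qSharp q).imK = -q.imK := rfl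
@[simp] lemma kq_re : kq.re = 0 := rfl
@[simp] lemma kq_imI : kq.imI = 0 := rfl
@[simp] lemma kq_imJ : kq.imJ = 0 := rfl
@[simp] lemma kq_imK : kq.imK = 1 := rfl

lemma qSharp_mul (p q : Quaternion ℝ) : qSharp (p * q) = qSharp q * qSharp p := by
  ext <;> simp [Quaternion.re_mul, Quaternion.imI_mul, Quaternion.imJ_mul,
    Quaternion.imK_mul] <;> ring

lemma qSharp_one : qSharp (1 : Quaternion ℝ) = 1 := by ext <;> simp [Quaternion.imK_one]

lemma qSharp_zero : qSharp (0 : Quaternion ℝ) = 0 := by ext <;> simp [Quaternion.imK_zero]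

lemma conjK (u : Quaternion ℝ) :
    qSharp u * kq * u = (Quaternion.normSq u : ℝ) • kq := by
  ext <;> simp [Quaternion.re_mul, Quaternion.imI_mul, Quaternion.imJ_mul,
    Quaternion.imK_mul, Quaternion.normSq_def'] <;> ring

lemma sub_qSharp (q : Quaternion ℝ) : q - qSharp q = (2*q.imK) • kq := by
  ext <;> simp <;> ring

/-- for `M = [[a,b],[c,d]] ∈ SL^♯(2,ℍ)` and `z` with `π_k(z) > 0`,
`c·z + d ≠ 0` and `π_k(M.z) = π_k(z) / nrm(c·z + d)`. -/
theorem imK_of_moebius (a b c d : Quaternion ℝ)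
    (h : !![a, b; c, d] * hatSigma !![a, b; c, d] = 1 ∧
         hatSigma !![a, b; c, d] * !![a, b; c, d] = 1) :
    ∀ z : Quaternion ℝ, 0 < z.imK →
      c * z + d ≠ 0 ∧
      ((a * z + b) * (c * z + d)⁻¹).imK = z.imK / Quaternion.normSq (c * z + d) := by
  obtain ⟨-, h2⟩ := h
  have e1 := congrFun (congrFun h2 0) 0
  have e2 := congrFun (congrFun h2 0) 1
  have e3 := congrFun (congrFun h2 1) 0
  have e4 := congrFun (congrFun h2 1) 1
  simp only [hatSigma, Matrix.mul_apply, Fin.sum_univ_two, Matrix.cons_val', Matrix.cons_val_zero,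
    Matrix.cons_val_one, Matrix.head_cons, Matrix.head_fin_const, Matrix.empty_val',
    Matrix.cons_val_fin_one, Matrix.head_val', Matrix.of_apply, Matrix.one_apply_eq,
    Matrix.one_apply_ne (by decide : (0:Fin 2) ≠ 1), Matrix.one_apply_ne (by decide : (1:Fin 2) ≠ 0),
    Matrix.neg_apply, neg_mul] at e1 e2 e3 e4
  intro z hz
  -- the key algebraic identity
  have key : qSharp (c*z+d) * (a*z+b) - qSharp (a*z+b) * (c*z+d) = z - qSharp z := by
    have expand : qSharp (c*z+d) * (a*z+b) - qSharp (a*z+b) * (c*z+d)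
        = qSharp z * -(-(qSharp c * a) + qSharp a * c) * z
          + qSharp z * -(-(qSharp c * b) + qSharp a * d)
          + (qSharp d * a + -(qSharp b * c)) * z
          + (qSharp d * b + -(qSharp b * d)) := by
      have hA : qSharp (c*z+d) = qSharp z * qSharp c + qSharp d := by
        rw [show qSharp (c*z+d) = qSharp (c*z) + qSharp d by
          ext <;> simp <;> ring, qSharp_mul]
      have hB : qSharp (a*z+b) = qSharp z * qSharp a + qSharp b := by
        rw [show qSharp (a*z+b) = qSharp (a*z) + qSharp b by
          ext <;> simp <;> ring, qSharp_mul]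
      rw [hA, hB]; noncomm_ring
    rw [expand, e1, e2, e3, e4]
    noncomm_ring
  set u := c*z+d with hu_def
  have hkz : z - qSharp z ≠ 0 := by
    rw [sub_qSharp]
    intro hc
    have := congrArg QuaternionAlgebra.imK hc
    simp [Quaternion.imK_zero] at this
    · linarith
  have hu : u ≠ 0 := by
    intro h0
    apply hkz
    rw [← key, h0, qSharp_zero]
    simp
  refine ⟨hu, ?_⟩
  have hsu : qSharp u * qSharp u⁻¹ = 1 := by
    rw [← qSharp_mul, inv_mul_cancel₀ hu, qSharp_one]
  set v := a*z+b with hv_def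
  set w := v * u⁻¹ with hw_def
  have main : qSharp u * (w - qSharp w) * u = z - qSharp z := by
    have hw' : qSharp w = qSharp u⁻¹ * qSharp v := qSharp_mul v u⁻¹
    calc qSharp u * (w - qSharp w) * u
        = qSharp u * v * (u⁻¹ * u) - (qSharp u * qSharp u⁻¹) * (qSharp v * u) := by
          rw [hw_def, hw']; noncomm_ring
      _ = qSharp u * v - qSharp v * u := by
          rw [inv_mul_cancel₀ hu, hsu, mul_one, one_mul]
      _ = z - qSharp z := key
  rw [sub_qSharp w, sub_qSharp z] at main
  rw [mul_smul_comm, smul_mul_assoc, conjK, smul_smul] at main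
  have hmk := congrArg QuaternionAlgebra.imK main
  simp only [Quaternion.imK_smul, kq_imK] at hmk
  have hns : Quaternion.normSq u ≠ 0 := by
    simpa [Quaternion.normSq_eq_zero] using hu
  have : w.imK * Quaternion.normSq u = z.imK := by
    simp at hmk
    nlinarith [hmk]
  field_simp
  linarith [this]
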